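/- If F : F_{2^n} → F_{2^n} is an o-polynomial, then for every b ∈ F_{2^n}, Σ_{v ∈ F_{2^n}} W_F(bv, v)^2 = 2^n · Σ_{γ ∈ F_{2^n}} |{z ∈ F_{2^n} : F(z+γ) + F(γ) + bz = 0}|, and for every nonzero b this equals 2^{2n+1}, since each inner set has exactly 2 elements. -/

import Mathlib

open scoped Classical
open Finset

noncomputable instance (n : ℕ) : Fintype (GaloisField 2 n) := Fintype.ofFinite _

/-- The absolute trace from `GF(2^n)` to `GF(2)`. -/
noncomputable def tr (n : ℕ) (x : GaloisField 2 n) : ZMod 2 :=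
  Algebra.trace (ZMod 2) (GaloisField 2 n) x

lemma chi_add (a b : ZMod 2) :
    (-1:ℤ)^(a+b).val = (-1:ℤ)^a.val * (-1:ℤ)^b.val := by revert a b; decide

lemma tr_add (n : ℕ) (x y : GaloisField 2 n) : tr n (x + y) = tr n x + tr n y :=
  map_add _ x y

lemma card_gf (n : ℕ) (hn : 0 < n) : Fintype.card (GaloisField 2 n) = 2 ^ n := by
  rw [← Nat.card_eq_fintype_card]; exact GaloisField.card 2 n hn.ne'

lemma char_sum (n : ℕ) (hn : 0 < n) (c : GaloisField 2 n) :
    ∑ v : GaloisField 2 n, (-1:ℤ)^(tr n (v * c)).val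
      = if c = 0 then (2:ℤ)^n else 0 := by
  split_ifs with h
  · subst h
    simp only [mul_zero]
    have : tr n 0 = 0 := map_zero _
    rw [this]
    simp [card_gf n hn]
  · obtain ⟨v0, hv0⟩ : ∃ v0, tr n (c * v0) ≠ 0 := by
      have htr := (traceForm_nondegenerate (ZMod 2) (GaloisField 2 n)).1 c
      simp_rw [Algebra.traceForm_apply] at htr
      by_contra! hf
      exact h (htr hf)
    have hv0' : tr n (v0 * c) = 1 := by
      rw [mul_comm] at hv0
      revert hv0; generalize tr n (v0 * c) = t; revert t; decide
    have key : ∀ v : GaloisField 2 n,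
        (-1:ℤ)^(tr n ((v + v0) * c)).val = -((-1:ℤ)^(tr n (v * c)).val) := by
      intro v
      rw [add_mul, tr_add, chi_add, hv0']
      have h1 : (1:ZMod 2).val = 1 := rfl
      rw [h1]; ring
    have h2 : ∑ v : GaloisField 2 n, (-1:ℤ)^(tr n (v * c)).val
        = ∑ v : GaloisField 2 n, (-1:ℤ)^(tr n ((v + v0) * c)).val :=
      (Equiv.sum_comp (Equiv.addRight v0) (fun v => (-1:ℤ)^(tr n (v * c)).val)).symm
    simp_rw [key, Finset.sum_neg_distrib] at h2
    linarith

/-- The Walsh transform of `F` at `(u, v)`. -/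
noncomputable def W (n : ℕ) (F : GaloisField 2 n → GaloisField 2 n)
    (u v : GaloisField 2 n) : ℤ :=
  ∑ x : GaloisField 2 n, (-1 : ℤ) ^ (tr n (v * F x) + tr n (u * x)).val

/-- `F` is an o-polynomial: for every nonzero `b` and every `a`, the equation
`F x + b * x = a` has 0 or 2 solutions. -/
def IsOPoly (n : ℕ) (F : GaloisField 2 n → GaloisField 2 n) : Prop :=
  ∀ b : GaloisField 2 n, b ≠ 0 → ∀ a : GaloisField 2 n,
    Nat.card {x : GaloisField 2 n // F x + b * x = a} = 0 ∨
    Nat.card {x : GaloisField 2 n // F x + b * x = a} = 2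

lemma ite_card (n : ℕ) (P : GaloisField 2 n → Prop) :
    ∑ z : GaloisField 2 n, (if P z then (2:ℤ)^n else 0)
      = (2:ℤ)^n * (Nat.card {z : GaloisField 2 n // P z} : ℤ) := by
  classical
  rw [Nat.card_eq_fintype_card, Fintype.card_subtype]
  rw [Finset.sum_ite, Finset.sum_const, Finset.sum_const_zero, add_zero]
  simp [mul_comm]

theorem o_polynomial_square_walsh_sums (n : ℕ) (hn : 0 < n)
    (F : GaloisField 2 n → GaloisField 2 n) (hF : IsOPoly n F) :
    (∀ b : GaloisField 2 n,
      ∑ v : GaloisField 2 n, W n F (b * v) v ^ 2 =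
        2 ^ n * ∑ γ : GaloisField 2 n,
          (Nat.card {z : GaloisField 2 n // F (z + γ) + F γ + b * z = 0} : ℤ)) ∧
    (∀ b : GaloisField 2 n, b ≠ 0 → ∀ γ : GaloisField 2 n,
      Nat.card {z : GaloisField 2 n // F (z + γ) + F γ + b * z = 0} = 2) ∧
    (∀ b : GaloisField 2 n, b ≠ 0 →
      ∑ v : GaloisField 2 n, W n F (b * v) v ^ 2 = 2 ^ (2 * n + 1)) := by
  have h2z : (2 : GaloisField 2 n) = 0 := CharTwo.two_eq_zero
  have hA : ∀ b : GaloisField 2 n,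
      ∑ v : GaloisField 2 n, W n F (b * v) v ^ 2 =
        2 ^ n * ∑ γ : GaloisField 2 n,
          (Nat.card {z : GaloisField 2 n // F (z + γ) + F γ + b * z = 0} : ℤ) := by
    intro b
    have step1 : ∀ v : GaloisField 2 n, W n F (b * v) v ^ 2 =
        ∑ x : GaloisField 2 n, ∑ y : GaloisField 2 n,
          (-1:ℤ) ^ (tr n (v * (F x + F y + b * (x + y)))).val := by
      intro v
      rw [W, sq, Finset.sum_mul_sum]
      refine Finset.sum_congr rfl fun x _ => Finset.sum_congr rfl fun y _ => ?_
      rw [← chi_add]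
      congr 1
      have hr : v * (F x + F y + b * (x + y)) =
          (v * F x + (b * v) * x) + (v * F y + (b * v) * y) := by ring
      rw [hr, tr_add, tr_add, tr_add]
    calc ∑ v : GaloisField 2 n, W n F (b * v) v ^ 2
        = ∑ v : GaloisField 2 n, ∑ x : GaloisField 2 n, ∑ y : GaloisField 2 n,
            (-1:ℤ) ^ (tr n (v * (F x + F y + b * (x + y)))).val :=
          Finset.sum_congr rfl fun v _ => step1 v
      _ = ∑ x : GaloisField 2 n, ∑ y : GaloisField 2 n, ∑ v : GaloisField 2 n,
            (-1:ℤ) ^ (tr n (v * (F x + F y + b * (x + y)))).val := by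
          rw [Finset.sum_comm]
          exact Finset.sum_congr rfl fun x _ => Finset.sum_comm
      _ = ∑ x : GaloisField 2 n, ∑ y : GaloisField 2 n,
            (if F x + F y + b * (x + y) = 0 then (2:ℤ)^n else 0) :=
          Finset.sum_congr rfl fun x _ => Finset.sum_congr rfl fun y _ =>
            char_sum n hn _
      _ = ∑ γ : GaloisField 2 n, ∑ x : GaloisField 2 n,
            (if F x + F γ + b * (x + γ) = 0 then (2:ℤ)^n else 0) :=
          Finset.sum_comm
      _ = ∑ γ : GaloisField 2 n, ∑ z : GaloisField 2 n,
            (if F (z + γ) + F γ + b * z = 0 then (2:ℤ)^n else 0) := by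
          refine Finset.sum_congr rfl fun γ _ => ?_
          rw [← Equiv.sum_comp (Equiv.addRight γ)
            (fun x => if F x + F γ + b * (x + γ) = 0 then (2:ℤ)^n else 0)]
          refine Finset.sum_congr rfl fun z _ => ?_
          simp only [Equiv.coe_addRight]
          have hzz : z + γ + γ = z := by
            rw [add_assoc, CharTwo.add_self_eq_zero, add_zero]
          simp only [hzz]
      _ = ∑ γ : GaloisField 2 n,
            ((2:ℤ)^n * (Nat.card {z : GaloisField 2 n // F (z + γ) + F γ + b * z = 0} : ℤ)) :=
          Finset.sum_congr rfl fun γ _ => ite_card n _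
      _ = 2 ^ n * ∑ γ : GaloisField 2 n,
            (Nat.card {z : GaloisField 2 n // F (z + γ) + F γ + b * z = 0} : ℤ) :=
          (Finset.mul_sum _ _ _).symm
  have hB : ∀ b : GaloisField 2 n, b ≠ 0 → ∀ γ : GaloisField 2 n,
      Nat.card {z : GaloisField 2 n // F (z + γ) + F γ + b * z = 0} = 2 := by
    intro b hb γ
    have e : {z : GaloisField 2 n // F (z + γ) + F γ + b * z = 0} ≃
        {x : GaloisField 2 n // F x + b * x = F γ + b * γ} := by
      refine Equiv.subtypeEquiv (Equiv.addRight γ) fun z => ?_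
      simp only [Equiv.coe_addRight]
      constructor
      · intro h; linear_combination h - F γ * h2z
      · intro h; linear_combination h + F γ * h2z
    rw [Nat.card_congr e]
    rcases hF b hb (F γ + b * γ) with h0 | h2
    · exfalso
      have hne : Nonempty {x : GaloisField 2 n // F x + b * x = F γ + b * γ} := ⟨⟨γ, rfl⟩⟩
      exact absurd h0 Nat.card_pos.ne'
    · exact h2
  refine ⟨hA, hB, fun b hb => ?_⟩
  rw [hA b]
  have hs : ∑ γ : GaloisField 2 n,
      (Nat.card {z : GaloisField 2 n // F (z + γ) + F γ + b * z = 0} : ℤ) =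
      ∑ _γ : GaloisField 2 n, (2:ℤ) :=
    Finset.sum_congr rfl fun γ _ => by rw [hB b hb γ]; norm_num
  rw [hs, Finset.sum_const, Finset.card_univ, card_gf n hn]
  rw [pow_succ, two_mul, pow_add]
  ring
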